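/- arXiv:2205.14732 — 4 statements merged into one kernel-verified Lean document; each statement's English description precedes it below -/
import Mathlib

section
/- Let A be a nonzero subalgebra of B(X) such that there exists a positive integer n with A₁⋯Aₙ = 0 for all A₁,…,Aₙ ∈ A (A is a nilpotent algebra). Then A has a non-trivial hyperinvariant subspace: there is a closed subspace M of X with {0} ≠ M ≠ X that is invariant under every operator in A and under every operator commuting with all of A. -/
/-- A nonzero nilpotent algebra of bounded operators on an infinite-dimensional complex
Banach space has a non-trivial hyperinvariant subspace: a closed subspace, different from
`{0}` and `X`, invariant under every operator in the algebra and under every operator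
commuting with the whole algebra. -/
theorem nilpotent_algebra_hyperinvariant
    {X : Type*} [NormedAddCommGroup X] [NormedSpace ℂ X] [CompleteSpace X]
    (hinf : ¬ FiniteDimensional ℂ X)
    (A : Set (X →L[ℂ] X))
    (hAadd : ∀ a ∈ A, ∀ b ∈ A, a + b ∈ A)
    (hAmul : ∀ a ∈ A, ∀ b ∈ A, a * b ∈ A)
    (hAsmul : ∀ (c : ℂ), ∀ a ∈ A, c • a ∈ A)
    (hA0 : ∃ T ∈ A, T ≠ 0)
    (hnil : ∃ n : ℕ, 0 < n ∧ ∀ l : List (X →L[ℂ] X),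
      l.length = n → (∀ a ∈ l, a ∈ A) → l.prod = 0) :
    ∃ M : Submodule ℂ X, IsClosed (M : Set X) ∧ M ≠ ⊥ ∧ M ≠ ⊤ ∧
      (∀ T ∈ A, ∀ x ∈ M, T x ∈ M) ∧
      (∀ S : X →L[ℂ] X, (∀ T ∈ A, S * T = T * S) → ∀ x ∈ M, S x ∈ M) := by
  classical
  obtain ⟨T₀, hT₀A, hT₀⟩ := hA0
  have hex := hnil
  set n := Nat.find hex with hn
  obtain ⟨hnpos, hprod⟩ := Nat.find_spec hex
  have hn1 : n ≠ 1 := by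
    intro h
    apply hT₀
    have := hprod [T₀] (by simp [← hn, h]) (by simp [hT₀A])
    simpa using this
  have hn2 : 2 ≤ n := by omega
  have hmin := Nat.find_min hex (m := n - 1) (by omega)
  push_neg at hmin
  obtain ⟨l, hlen, hmem, hne⟩ := hmin (by omega)
  set A₀ := l.prod with hA₀def
  have hA₀T : ∀ T ∈ A, A₀ * T = 0 := by
    intro T hT
    have := hprod (l ++ [T]) (by simp [hlen]; omega)
      (by
        intro a ha
        rcases List.mem_append.mp ha with h | h
        · exact hmem a h
        · simp at h; subst h; exact hT)
    simpa [hA₀def] using this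
  -- l is nonempty, its head is in A
  obtain ⟨a, l', rfl⟩ : ∃ a l', l = a :: l' := by
    cases l with
    | nil => simp at hlen; omega
    | cons a l' => exact ⟨a, l', rfl⟩
  have haA : a ∈ A := hmem a (by simp)
  have hA₀A₀ : A₀ * A₀ = 0 := by
    have : A₀ * A₀ = (A₀ * a) * l'.prod := by
      simp [hA₀def, List.prod_cons, mul_assoc]
    rw [this, hA₀T a haA, zero_mul]
  obtain ⟨y, hy⟩ : ∃ y, A₀ y ≠ 0 := by
    by_contra h
    push_neg at h
    exact hne (ContinuousLinearMap.ext fun x => by simpa using h x)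
  refine ⟨LinearMap.ker (A₀ : X →ₗ[ℂ] X), ContinuousLinearMap.isClosed_ker A₀, ?_, ?_, ?_, ?_⟩
  · rw [Submodule.ne_bot_iff]
    refine ⟨A₀ y, ?_, hy⟩
    have : A₀ (A₀ y) = (A₀ * A₀) y := rfl
    simp [LinearMap.mem_ker, this, hA₀A₀]
  · intro h
    apply hy
    have : y ∈ LinearMap.ker (A₀ : X →ₗ[ℂ] X) := h ▸ Submodule.mem_top
    simpa [LinearMap.mem_ker] using this
  · intro T hT x _
    have : A₀ (T x) = (A₀ * T) x := rfl
    simp [LinearMap.mem_ker, this, hA₀T T hT]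
  · intro S hS x hx
    have hcomm : Commute S A₀ := by
      apply Commute.list_prod_right
      intro b hb
      exact hS b (hmem b hb)
    have hx0 : A₀ x = 0 := hx
    have : A₀ (S x) = S (A₀ x) := by
      have := hcomm.eq
      calc A₀ (S x) = (A₀ * S) x := rfl
        _ = (S * A₀) x := by rw [← hcomm.eq]
        _ = S (A₀ x) := rfl
    simp [LinearMap.mem_ker, this, hx0]
end

section
/- Let λ ∈ ℂ and let S be a linear subspace of B(X) with A² = λA for every A ∈ S, and suppose S contains a non-scalar operator A. Then ker(A) is a non-trivial closed subspace of X invariant under every operator in S and under every operator commuting with A. -/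
/-- If `S` is a linear subspace of operators with `A² = λA` for all `A ∈ S` and `A ∈ S` is
non-scalar, then `ker A` is a non-trivial closed subspace invariant under every operator in
`S` and under every operator commuting with `A`. -/
theorem kernel_hyperinvariant_of_sq_eq_smul
    {X : Type*} [NormedAddCommGroup X] [NormedSpace ℂ X] [CompleteSpace X]
    (lam : ℂ) (S : Submodule ℂ (X →L[ℂ] X))
    (h : ∀ A ∈ S, A * A = lam • A)
    (A : X →L[ℂ] X) (hA : A ∈ S)
    (hns : ∀ c : ℂ, A ≠ c • (1 : X →L[ℂ] X)) :
    IsClosed ((LinearMap.ker (A : X →ₗ[ℂ] X) : Submodule ℂ X) : Set X) ∧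
      LinearMap.ker (A : X →ₗ[ℂ] X) ≠ ⊥ ∧ LinearMap.ker (A : X →ₗ[ℂ] X) ≠ ⊤ ∧
      (∀ B ∈ S, ∀ x ∈ LinearMap.ker (A : X →ₗ[ℂ] X), B x ∈ LinearMap.ker (A : X →ₗ[ℂ] X)) ∧
      (∀ T : X →L[ℂ] X, T * A = A * T → ∀ x ∈ LinearMap.ker (A : X →ₗ[ℂ] X), T x ∈ LinearMap.ker (A : X →ₗ[ℂ] X)) := by
  refine ⟨?_, ?_, ?_, ?_, ?_⟩
  · exact ContinuousLinearMap.isClosed_ker A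
  · -- ker A ≠ ⊥
    intro hbot
    apply hns lam
    ext x
    have h1 : A (A x - lam • x) = 0 := by
      have := congrFun (congrArg DFunLike.coe (h A hA)) x
      simp only [ContinuousLinearMap.mul_apply, ContinuousLinearMap.smul_apply] at this
      simp [map_sub, this, map_smul]
    have h2 : A x - lam • x ∈ LinearMap.ker (A : X →ₗ[ℂ] X) := h1
    rw [hbot, Submodule.mem_bot, sub_eq_zero] at h2
    simpa using h2
  · -- ker A ≠ ⊤
    intro htop
    apply hns 0
    ext x
    have : x ∈ LinearMap.ker (A : X →ₗ[ℂ] X) := htop ▸ Submodule.mem_top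
    simpa using this
  · intro B hB x hx
    have hAB : A * B + B * A = 0 := by
      have hsum := h (A + B) (S.add_mem hA hB)
      have hAA := h A hA
      have hBB := h B hB
      rw [add_mul, mul_add, mul_add, hAA, hBB, smul_add] at hsum
      have : lam • A + (A * B + (B * A + lam • B)) = lam • A + lam • B := by
        linear_combination (norm := abel_nf) hsum
      have := add_left_cancel this
      linear_combination (norm := abel_nf) this
    have hx0 : A x = 0 := hx
    have := congrFun (congrArg DFunLike.coe hAB) x
    simp only [ContinuousLinearMap.add_apply, ContinuousLinearMap.mul_apply,
      ContinuousLinearMap.zero_apply, hx0, map_zero, add_zero] at this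
    exact this
  · intro T hT x hx
    have hx0 : A x = 0 := hx
    have := congrFun (congrArg DFunLike.coe hT) x
    simp only [ContinuousLinearMap.mul_apply, hx0, map_zero] at this
    exact this.symm
end

section
/- Let R be an associative (not necessarily unital) ring which is an algebra over a field of characteristic zero, and suppose there is n ≥ 1 with xⁿ = 0 for all x ∈ R (R is a nil-algebra of bounded index n). Then R is nilpotent: there exists N (one may take N = 2ⁿ − 1) such that every product of N elements of R is zero. -/
/-- The product `a * l₁ * l₂ * ⋯` of a nonempty family of elements of a (possibly non-unital)
ring, given by a head `a` and tail list `l`. -/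
def nprod {R : Type*} [Mul R] (a : R) (l : List R) : R :=
  l.foldl (· * ·) a

open Finset in
/-- Vandermonde extraction: if all "sample sums" `∑ d, t^d • v d` for `t = 0,…,N` lie in a
submodule `I` of a module over a `CharZero` field, then each `v d` lies in `I`. -/
theorem vdm_extract {F : Type*} [Field F] [CharZero F] {M : Type*} [AddCommGroup M]
    [Module F M] (I : Submodule F M) (N : ℕ) (v : Fin (N + 1) → M)
    (h : ∀ t : Fin (N + 1), ∑ d : Fin (N + 1), ((t : ℕ) : F) ^ (d : ℕ) • v d ∈ I) :
    ∀ d, v d ∈ I := by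
  intro d
  set V : Matrix (Fin (N + 1)) (Fin (N + 1)) F :=
    Matrix.of fun t d : Fin (N + 1) => ((t : ℕ) : F) ^ (d : ℕ) with hV
  have hinj : Function.Injective (fun t : Fin (N + 1) => ((t : ℕ) : F)) := by
    intro s t hst
    simp only [Nat.cast_inj] at hst
    exact Fin.ext hst
  have hdet : V.det ≠ 0 := by
    have : V = (Matrix.vandermonde fun t : Fin (N + 1) => ((t : ℕ) : F)) := by
      ext t e; simp [hV, Matrix.vandermonde]
    rw [this, Matrix.det_vandermonde_ne_zero_iff]
    exact hinj
  have hunit : IsUnit V.det := hdet.isUnit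
  have hVV : V⁻¹ * V = 1 := Matrix.nonsing_inv_mul V hunit
  have key : v d = ∑ t : Fin (N + 1), V⁻¹ d t • ∑ e : Fin (N + 1), ((t : ℕ) : F) ^ (e : ℕ) • v e := by
    have : ∀ t, (V⁻¹ d t) • ∑ e : Fin (N + 1), ((t : ℕ) : F) ^ (e : ℕ) • v e
        = ∑ e : Fin (N + 1), (V⁻¹ d t * V t e) • v e := by
      intro t
      rw [Finset.smul_sum]
      exact Finset.sum_congr rfl fun e _ => by rw [smul_smul]; rfl
    rw [Finset.sum_congr rfl fun t _ => this t, Finset.sum_comm]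
    have : ∀ e : Fin (N + 1), ∑ t, (V⁻¹ d t * V t e) • v e = ((V⁻¹ * V) d e) • v e := by
      intro e
      rw [Matrix.mul_apply, Finset.sum_smul]
    rw [Finset.sum_congr rfl fun e _ => this e]
    rw [hVV]
    simp [Matrix.one_apply, Finset.sum_ite_eq]
  rw [key]
  exact Submodule.sum_mem I fun t _ => Submodule.smul_mem I _ (h t)

theorem nc_expand {F : Type*} [Field F] {A : Type*} [Ring A] [Algebra F A]
    (x y : A) : ∀ N : ℕ, ∃ T : ℕ → A,
      T 0 = x ^ N ∧
      T 1 = ∑ i ∈ Finset.range N, x ^ i * y * x ^ (N - 1 - i) ∧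
      (∀ d, N < d → T d = 0) ∧
      ∀ c : F, (x + c • y) ^ N = ∑ d ∈ Finset.range (N + 1), c ^ d • T d := by
  intro N
  induction N with
  | zero =>
    refine ⟨fun d => if d = 0 then 1 else 0, by simp, by simp, ?_, fun c => by simp⟩
    intro d hd
    show (if d = 0 then (1:A) else 0) = 0
    rw [if_neg (by omega : ¬ d = 0)]
  | succ N ih =>
    obtain ⟨T, hT0, hT1, hTz, hTe⟩ := ih
    refine ⟨fun d => match d with
      | 0 => T 0 * x
      | e + 1 => T (e + 1) * x + T e * y, ?_, ?_, ?_, ?_⟩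
    · simp only [hT0, pow_succ]
    · show T 1 * x + T 0 * y = _
      have hsub : ∀ i, N + 1 - 1 - i = N - i := fun i => by omega
      simp only [hsub]
      rw [Finset.sum_range_succ, Nat.sub_self, pow_zero, mul_one, hT1, hT0, Finset.sum_mul]
      congr 1
      refine Finset.sum_congr rfl fun i hi => ?_
      have hiN : i < N := Finset.mem_range.mp hi
      rw [(by omega : N - i = (N - 1 - i) + 1), pow_succ, ← mul_assoc]
    · intro d hd
      match d with
      | 0 => omega
      | e + 1 =>
        show T (e + 1) * x + T e * y = 0
        rw [hTz (e + 1) (by omega), hTz e (by omega), zero_mul, zero_mul, add_zero]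
    · intro c
      rw [pow_succ, hTe c, Finset.sum_mul]
      have expand1 : ∀ d, (c ^ d • T d) * (x + c • y)
          = c ^ d • (T d * x) + c ^ (d + 1) • (T d * y) := by
        intro d
        rw [mul_add, smul_mul_assoc, smul_mul_assoc, mul_smul_comm, smul_smul, pow_succ]
      rw [Finset.sum_congr rfl fun d _ => expand1 d, Finset.sum_add_distrib]
      rw [Finset.sum_range_succ' (fun d => c ^ d • ((match d with
        | 0 => T 0 * x
        | e + 1 => T (e + 1) * x + T e * y : A))) (N + 1)]
      show _ = (∑ e ∈ Finset.range (N + 1), c ^ (e + 1) • (T (e + 1) * x + T e * y))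
        + c ^ 0 • (T 0 * x)
      have split : ∀ e, c ^ (e + 1) • (T (e + 1) * x + T e * y)
          = c ^ (e + 1) • (T (e + 1) * x) + c ^ (e + 1) • (T e * y) := fun e => smul_add _ _ _
      rw [Finset.sum_congr rfl fun e _ => split e, Finset.sum_add_distrib]
      have first : ∑ d ∈ Finset.range (N + 1), c ^ d • (T d * x)
          = c ^ 0 • (T 0 * x) + ∑ e ∈ Finset.range (N + 1), c ^ (e + 1) • (T (e + 1) * x) := by
        rw [Finset.sum_range_succ' (fun d => c ^ d • (T d * x)) N, add_comm]
        congr 1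
        rw [Finset.sum_range_succ, hTz (N + 1) (by omega), zero_mul, smul_zero, add_zero]
      rw [first]
      abel

theorem linearize {F : Type*} [Field F] [CharZero F] {A : Type*} [Ring A] [Algebra F A]
    (S I : Submodule F A) (m : ℕ)
    (hpow : ∀ s ∈ S, s ^ (m + 1) ∈ I)
    {x y : A} (hx : x ∈ S) (hy : y ∈ S) :
    ∑ i ∈ Finset.range (m + 1), x ^ i * y * x ^ (m - i) ∈ I := by
  obtain ⟨T, hT0, hT1, hTz, hTe⟩ := nc_expand (F := F) x y (m + 1)
  have hsample : ∀ t : Fin (m + 2), ∑ d : Fin (m + 2), ((t : ℕ) : F) ^ (d : ℕ) • T (d : ℕ) ∈ I := by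
    intro t
    have hmem : (x + ((t : ℕ) : F) • y) ^ (m + 1) ∈ I :=
      hpow _ (Submodule.add_mem S hx (Submodule.smul_mem S _ hy))
    rw [hTe, Finset.sum_range] at hmem
    exact hmem
  have := vdm_extract I (m + 1) (fun d : Fin (m + 2) => T (d : ℕ)) hsample ⟨1, by omega⟩
  simp only at this
  rw [hT1] at this
  simpa using this

open Finset in
theorem combine {A : Type*} [AddCommGroup A] (m : ℕ) (hm : 1 ≤ m)
    (Ff Gg Hh : ℕ → ℕ → A) (D E : ℕ → A) (T : A)
    (hG0 : ∀ q ∈ Icc 1 m, Gg 0 q = E q)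
    (hGm : ∀ q ∈ Icc 1 m, Gg m q = Ff m q)
    (hGp0 : ∀ p ∈ Icc 1 (m-1), Gg p 0 = D p)
    (hH0 : ∀ q ∈ Icc 1 m, Hh 0 q = E q)
    (hHm : ∀ q ∈ Icc 1 m, Hh m q = Ff 0 q)
    (hHp0 : ∀ p ∈ Icc 1 (m-1), Hh p 0 = D p)
    (hFp0 : ∀ p ∈ Icc 1 (m-1), Ff p 0 = T)
    (hD0 : D 0 = E 0) (hDm : D m = T) :
    (∑ k ∈ Icc 1 m, ∑ i ∈ range (m+1), Gg i k)
    + (∑ k ∈ Icc 1 m, ∑ i ∈ range (m+1), Hh i k)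
    - (∑ k ∈ Icc 1 m, ∑ i ∈ range (m+1), Ff i k)
    + 2 • (∑ i ∈ range (m+1), D i)
    - 2 • (∑ j ∈ range (m+1), E j)
    - (∑ k ∈ Icc 1 (m-1), ∑ j ∈ range (m+1), Hh k j)
    - (∑ k ∈ Icc 1 (m-1), ∑ j ∈ range (m+1), Gg k j)
    + (∑ k ∈ Icc 1 (m-1), ∑ j ∈ range (m+1), Ff k j)
    = (m+1) • T := by
  have h0 : ∀ g : ℕ → A, ∑ p ∈ range (m+1), g p = g 0 + ∑ p ∈ Icc 1 m, g p := by
    intro g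
    have h : range (m+1) = insert 0 (Icc 1 m) := by ext p; simp; omega
    rw [h, Finset.sum_insert (by simp)]
  have h1 : ∀ g : ℕ → A, ∑ p ∈ Icc 1 m, g p = (∑ p ∈ Icc 1 (m-1), g p) + g m := by
    intro g
    have h : Icc 1 m = insert m (Icc 1 (m-1)) := by ext p; simp; omega
    rw [h, Finset.sum_insert (by simp; omega), add_comm]
  have h3 : ∀ g : ℕ → A, ∑ p ∈ range (m+1), g p
      = g 0 + (∑ p ∈ Icc 1 (m-1), g p) + g m := by
    intro g; rw [h0, h1, add_assoc]
  -- expand the [0,m]-inner double sums with h3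
  have e1 : ∑ k ∈ Icc 1 m, ∑ i ∈ range (m+1), Gg i k
      = (∑ k ∈ Icc 1 m, E k) + (∑ k ∈ Icc 1 m, ∑ i ∈ Icc 1 (m-1), Gg i k)
        + (∑ k ∈ Icc 1 m, Ff m k) := by
    rw [← Finset.sum_add_distrib, ← Finset.sum_add_distrib]
    refine Finset.sum_congr rfl fun k hk => ?_
    rw [h3 (fun i => Gg i k), hG0 k hk, hGm k hk]
  have e2 : ∑ k ∈ Icc 1 m, ∑ i ∈ range (m+1), Hh i k
      = (∑ k ∈ Icc 1 m, E k) + (∑ k ∈ Icc 1 m, ∑ i ∈ Icc 1 (m-1), Hh i k)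
        + (∑ k ∈ Icc 1 m, Ff 0 k) := by
    rw [← Finset.sum_add_distrib, ← Finset.sum_add_distrib]
    refine Finset.sum_congr rfl fun k hk => ?_
    rw [h3 (fun i => Hh i k), hH0 k hk, hHm k hk]
  have e3 : ∑ k ∈ Icc 1 m, ∑ i ∈ range (m+1), Ff i k
      = (∑ k ∈ Icc 1 m, Ff 0 k) + (∑ k ∈ Icc 1 m, ∑ i ∈ Icc 1 (m-1), Ff i k)
        + (∑ k ∈ Icc 1 m, Ff m k) := by
    rw [← Finset.sum_add_distrib, ← Finset.sum_add_distrib]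
    exact Finset.sum_congr rfl fun k hk => h3 (fun i => Ff i k)
  have e6 : ∑ k ∈ Icc 1 (m-1), ∑ j ∈ range (m+1), Hh k j
      = (∑ k ∈ Icc 1 (m-1), D k) + (∑ k ∈ Icc 1 (m-1), ∑ j ∈ Icc 1 m, Hh k j) := by
    rw [← Finset.sum_add_distrib]
    refine Finset.sum_congr rfl fun k hk => ?_
    rw [h0 (fun j => Hh k j), hHp0 k hk]
  have e7 : ∑ k ∈ Icc 1 (m-1), ∑ j ∈ range (m+1), Gg k j
      = (∑ k ∈ Icc 1 (m-1), D k) + (∑ k ∈ Icc 1 (m-1), ∑ j ∈ Icc 1 m, Gg k j) := by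
    rw [← Finset.sum_add_distrib]
    refine Finset.sum_congr rfl fun k hk => ?_
    rw [h0 (fun j => Gg k j), hGp0 k hk]
  have e8 : ∑ k ∈ Icc 1 (m-1), ∑ j ∈ range (m+1), Ff k j
      = (m-1) • T + (∑ k ∈ Icc 1 (m-1), ∑ j ∈ Icc 1 m, Ff k j) := by
    have : ∑ k ∈ Icc 1 (m-1), ∑ j ∈ range (m+1), Ff k j
        = (∑ k ∈ Icc 1 (m-1), T) + (∑ k ∈ Icc 1 (m-1), ∑ j ∈ Icc 1 m, Ff k j) := by
      rw [← Finset.sum_add_distrib]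
      refine Finset.sum_congr rfl fun k hk => ?_
      rw [h0 (fun j => Ff k j), hFp0 k hk]
    rw [this, Finset.sum_const, Nat.card_Icc]
    norm_num
  have e4 : ∑ i ∈ range (m+1), D i = E 0 + (∑ p ∈ Icc 1 (m-1), D p) + T := by
    rw [h3 D, hD0, hDm]
  have e5 : ∑ j ∈ range (m+1), E j = E 0 + ∑ j ∈ Icc 1 m, E j := h0 E
  rw [e1, e2, e3, e4, e5, e6, e7, e8]
  rw [Finset.sum_comm (s := Icc 1 m) (t := Icc 1 (m-1)) (f := fun k i => Gg i k)]
  rw [Finset.sum_comm (s := Icc 1 m) (t := Icc 1 (m-1)) (f := fun k i => Hh i k)]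
  rw [Finset.sum_comm (s := Icc 1 m) (t := Icc 1 (m-1)) (f := fun k i => Ff i k)]
  rw [show m + 1 = 2 + (m-1) by omega, add_smul]
  abel

open Finset in
theorem higman_key {F : Type*} [Field F] [CharZero F] {A : Type*} [Ring A] [Algebra F A]
    (S I : Submodule F A)
    (hSl : ∀ (x : A), ∀ s ∈ S, x * s ∈ S) (hSr : ∀ (x : A), ∀ s ∈ S, s * x ∈ S)
    (hIl : ∀ (x : A), ∀ s ∈ I, x * s ∈ I) (hIr : ∀ (x : A), ∀ s ∈ I, s * x ∈ I)
    (m : ℕ) (hm : 1 ≤ m)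
    (hpow : ∀ s ∈ S, s ^ (m + 1) ∈ I)
    {a b w : A} (ha : a ∈ S) (hb : b ∈ S) (hw : w ∈ S) :
    a ^ m * (w * b ^ m) ∈ I := by
  have hσ : ∀ x y : A, x ∈ S → y ∈ S →
      ∑ i ∈ range (m + 1), x ^ i * y * x ^ (m - i) ∈ I := fun x y hx hy =>
    linearize S I m hpow hx hy
  have hSpow : ∀ x : A, x ∈ S → ∀ k, 1 ≤ k → x ^ k ∈ S := by
    intro x hx k hk
    induction k with
    | zero => omega
    | succ k ih =>
      rcases Nat.eq_or_lt_of_le hk with h | h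
      · rw [← h, pow_one]; exact hx
      · rw [pow_succ]; exact hSr x _ (ih (by omega))
  set Ff : ℕ → ℕ → A := fun p q => a^p * (b^q * (a^(m-p) * (w * b^(m-q)))) with hFfdef
  set Gg : ℕ → ℕ → A := fun p q => a^p * (b^q * (w * (b^(m-q) * a^(m-p)))) with hGgdef
  set D : ℕ → A := fun i => a^i * (w * (b^m * a^(m-i))) with hDdef
  set E : ℕ → A := fun j => b^j * (w * (b^(m-j) * a^m)) with hEdef
  set Hh : ℕ → ℕ → A := fun p q => b^q * (a^p * (w * (b^(m-q) * a^(m-p)))) with hHhdef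
  -- memberships of the eight sums
  have s1 : (∑ k ∈ Icc 1 m, ∑ i ∈ range (m+1), Gg i k) ∈ I := by
    refine Submodule.sum_mem I fun k hk => ?_
    have h := hσ a (b^k * (w * b^(m-k))) ha (hSl _ _ (hSr _ _ hw))
    simp only [mul_assoc] at h ⊢
    exact h
  have s2 : (∑ k ∈ Icc 1 m, ∑ i ∈ range (m+1), Hh i k) ∈ I := by
    refine Submodule.sum_mem I fun k hk => ?_
    have h := hIl (b^k) _ (hσ a (w * b^(m-k)) ha (hSr _ _ hw))
    rw [Finset.mul_sum] at h
    simp only [mul_assoc] at h ⊢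
    exact h
  have s3 : (∑ k ∈ Icc 1 m, ∑ i ∈ range (m+1), Ff i k) ∈ I := by
    refine Submodule.sum_mem I fun k hk => ?_
    have hk1 : 1 ≤ k := (Finset.mem_Icc.mp hk).1
    have h := hIr (w * b^(m-k)) _ (hσ a (b^k) ha (hSpow b hb k hk1))
    rw [Finset.sum_mul] at h
    simp only [mul_assoc] at h ⊢
    exact h
  have s4 : (∑ i ∈ range (m+1), D i) ∈ I := by
    have h := hσ a (w * b^m) ha (hSr _ _ hw)
    simp only [mul_assoc] at h ⊢
    exact h
  have s5 : (∑ j ∈ range (m+1), E j) ∈ I := by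
    have h := hIr (a^m) _ (hσ b w hb hw)
    rw [Finset.sum_mul] at h
    simp only [mul_assoc] at h ⊢
    exact h
  have s6 : (∑ k ∈ Icc 1 (m-1), ∑ j ∈ range (m+1), Hh k j) ∈ I := by
    refine Submodule.sum_mem I fun k hk => ?_
    have h := hIr (a^(m-k)) _ (hσ b (a^k * w) hb (hSl _ _ hw))
    rw [Finset.sum_mul] at h
    simp only [mul_assoc] at h ⊢
    exact h
  have s7 : (∑ k ∈ Icc 1 (m-1), ∑ j ∈ range (m+1), Gg k j) ∈ I := by
    refine Submodule.sum_mem I fun k hk => ?_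
    have h := hIl (a^k) _ (hIr (a^(m-k)) _ (hσ b w hb hw))
    rw [Finset.sum_mul, Finset.mul_sum] at h
    simp only [mul_assoc] at h ⊢
    exact h
  have s8 : (∑ k ∈ Icc 1 (m-1), ∑ j ∈ range (m+1), Ff k j) ∈ I := by
    refine Submodule.sum_mem I fun k hk => ?_
    have h := hIl (a^k) _ (hσ b (a^(m-k) * w) hb (hSl _ _ hw))
    rw [Finset.mul_sum] at h
    simp only [mul_assoc] at h ⊢
    exact h
  -- the certificate
  have hcert := combine m hm Ff Gg Hh D E (a ^ m * (w * b ^ m))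
    (fun q hq => by simp [hGgdef, hEdef])
    (fun q hq => by simp [hGgdef, hFfdef, Nat.sub_self])
    (fun p hp => by simp [hGgdef, hDdef])
    (fun q hq => by simp [hHhdef, hEdef])
    (fun q hq => by simp [hHhdef, hFfdef, Nat.sub_self])
    (fun p hp => by simp [hHhdef, hDdef])
    (fun p hp => by
      have hpm : p ≤ m := by
        have := Finset.mem_Icc.mp hp; omega
      simp only [hFfdef, pow_zero, one_mul, Nat.sub_zero]
      rw [← mul_assoc, ← pow_add, Nat.add_sub_cancel' hpm])
    (by simp [hDdef, hEdef])
    (by simp [hDdef, Nat.sub_self])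
  have t4 : 2 • (∑ i ∈ range (m+1), D i) ∈ I := by rw [two_smul]; exact add_mem s4 s4
  have t5 : 2 • (∑ j ∈ range (m+1), E j) ∈ I := by rw [two_smul]; exact add_mem s5 s5
  have hmem : (m+1) • (a ^ m * (w * b ^ m)) ∈ I := by
    rw [← hcert]
    exact add_mem (sub_mem (sub_mem (sub_mem (add_mem (sub_mem (add_mem s1 s2) s3) t4) t5) s6) s7) s8
  have hn0 : ((m+1 : ℕ) : F) ≠ 0 := Nat.cast_ne_zero.mpr (by omega)
  have h2 : ((m+1 : ℕ) : F) • (a ^ m * (w * b ^ m)) ∈ I := by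
    rw [Nat.cast_smul_eq_nsmul]; exact hmem
  have h3 := Submodule.smul_mem I ((m+1 : ℕ) : F)⁻¹ h2
  rw [smul_smul, inv_mul_cancel₀ hn0, one_smul] at h3
  exact h3

theorem higman_induct {F : Type*} [Field F] [CharZero F] {A : Type*} [Ring A] [Algebra F A]
    (S : Submodule F A)
    (hSl : ∀ (x : A), ∀ s ∈ S, x * s ∈ S) (hSr : ∀ (x : A), ∀ s ∈ S, s * x ∈ S) :
    ∀ n : ℕ, 1 ≤ n → ∀ I : Submodule F A,
      (∀ (x : A), ∀ s ∈ I, x * s ∈ I) → (∀ (x : A), ∀ s ∈ I, s * x ∈ I) →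
      (∀ s ∈ S, s ^ n ∈ I) →
      ∀ l : List A, (∀ x ∈ l, x ∈ S) → l.length = 2 ^ n - 1 → l.prod ∈ I := by
  intro n hn
  induction n, hn using Nat.le_induction with
  | base =>
    intro I hIl hIr hpow l hl hlen
    match l, hlen with
    | [x], _ =>
      rw [List.prod_cons, List.prod_nil, mul_one]
      have := hpow x (hl x (by simp))
      rwa [pow_one] at this
  | succ n hn ih =>
    intro I hIl hIr hpow l hl hlen
    set genSet : Set A := {x | ∃ z u v : A, z ∈ S ∧ x = u * (z ^ n * v)} with hgen
    set J : Submodule F A := I ⊔ Submodule.span F genSet with hJ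
    have hspanl : ∀ (x : A), ∀ p ∈ Submodule.span F genSet, x * p ∈ Submodule.span F genSet := by
      intro x p hp
      induction hp using Submodule.span_induction with
      | mem y hy =>
        obtain ⟨z, u, v, hz, rfl⟩ := hy
        exact Submodule.subset_span ⟨z, x * u, v, hz, by rw [mul_assoc]⟩
      | zero => rw [mul_zero]; exact Submodule.zero_mem _
      | add y₁ y₂ h₁ h₂ ih₁ ih₂ => rw [mul_add]; exact Submodule.add_mem _ ih₁ ih₂
      | smul c y hy ihy => rw [mul_smul_comm]; exact Submodule.smul_mem _ c ihy
    have hspanr : ∀ (x : A), ∀ p ∈ Submodule.span F genSet, p * x ∈ Submodule.span F genSet := by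
      intro x p hp
      induction hp using Submodule.span_induction with
      | mem y hy =>
        obtain ⟨z, u, v, hz, rfl⟩ := hy
        exact Submodule.subset_span ⟨z, u, v * x, hz, by simp [mul_assoc]⟩
      | zero => rw [zero_mul]; exact Submodule.zero_mem _
      | add y₁ y₂ h₁ h₂ ih₁ ih₂ => rw [add_mul]; exact Submodule.add_mem _ ih₁ ih₂
      | smul c y hy ihy => rw [smul_mul_assoc]; exact Submodule.smul_mem _ c ihy
    have hJl : ∀ (x : A), ∀ s ∈ J, x * s ∈ J := by
      intro x s hs
      obtain ⟨i, hi, p, hp, rfl⟩ := Submodule.mem_sup.mp hs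
      rw [mul_add]
      exact Submodule.add_mem _ (Submodule.mem_sup_left (hIl x i hi))
        (Submodule.mem_sup_right (hspanl x p hp))
    have hJr : ∀ (x : A), ∀ s ∈ J, s * x ∈ J := by
      intro x s hs
      obtain ⟨i, hi, p, hp, rfl⟩ := Submodule.mem_sup.mp hs
      rw [add_mul]
      exact Submodule.add_mem _ (Submodule.mem_sup_left (hIr x i hi))
        (Submodule.mem_sup_right (hspanr x p hp))
    have hJpow : ∀ s ∈ S, s ^ n ∈ J := by
      intro s hs
      exact Submodule.mem_sup_right (Submodule.subset_span ⟨s, 1, 1, hs, by simp⟩)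
    have hpow' : ∀ s ∈ S, s ^ (n + 1) ∈ I := hpow
    have lemA : ∀ q ∈ J, ∀ (u z v : A), z ∈ S → v ∈ S → u * (z ^ n * (v * q)) ∈ I := by
      intro q hq u z v hz hv
      obtain ⟨i, hi, p, hp, rfl⟩ := Submodule.mem_sup.mp hq
      clear hq
      rw [mul_add, mul_add, mul_add]
      refine Submodule.add_mem _ (hIl _ _ (hIl _ _ (hIl _ _ hi))) ?_
      induction hp using Submodule.span_induction with
      | mem y hy =>
        obtain ⟨z', u', v', hz', rfl⟩ := hy
        have key := higman_key S I hSl hSr hIl hIr n hn hpow' hz hz' (hSr u' v hv)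
        have h2 := hIr v' _ (hIl u _ key)
        simp only [mul_assoc] at h2 ⊢
        exact h2
      | zero => rw [mul_zero, mul_zero, mul_zero]; exact Submodule.zero_mem _
      | add y₁ y₂ h₁ h₂ ih₁ ih₂ =>
        rw [mul_add, mul_add, mul_add]; exact Submodule.add_mem _ ih₁ ih₂
      | smul c y hy ihy =>
        rw [mul_smul_comm, mul_smul_comm, mul_smul_comm]; exact Submodule.smul_mem _ c ihy
    have hkey : ∀ p ∈ J, ∀ c ∈ S, ∀ q ∈ J, p * (c * q) ∈ I := by
      intro p hp c hc q hq
      obtain ⟨i, hi, pp, hpp, rfl⟩ := Submodule.mem_sup.mp hp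
      clear hp
      rw [add_mul]
      refine Submodule.add_mem _ (hIr _ _ hi) ?_
      induction hpp using Submodule.span_induction with
      | mem y hy =>
        obtain ⟨z, u, v, hz, rfl⟩ := hy
        have h2 := lemA q hq u z (v * c) hz (hSl v c hc)
        simp only [mul_assoc] at h2 ⊢
        exact h2
      | zero => rw [zero_mul]; exact Submodule.zero_mem _
      | add y₁ y₂ h₁ h₂ ih₁ ih₂ => rw [add_mul]; exact Submodule.add_mem _ ih₁ ih₂
      | smul c' y hy ihy => rw [smul_mul_assoc]; exact Submodule.smul_mem _ c' ihy
    -- split the list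
    have hp2 : (1:ℕ) ≤ 2 ^ n := Nat.one_le_two_pow
    have hp2' : (2:ℕ) ^ (n+1) = 2 ^ n * 2 := pow_succ 2 n
    set M := 2 ^ n - 1 with hM
    have hlen1 : (l.take M).length = M := by
      rw [List.length_take]; omega
    have hlend : (l.drop M).length = 2 ^ n := by
      rw [List.length_drop]; omega
    have hne : l.drop M ≠ [] := by
      intro h; rw [h] at hlend; simp at hlend; omega
    obtain ⟨c, l₂, hcl⟩ := List.exists_cons_of_ne_nil hne
    have hlen2 : l₂.length = M := by
      have := hlend; rw [hcl] at this; simp at this; omega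
    have hP : (l.take M).prod ∈ J :=
      ih J hJl hJr hJpow _ (fun x hx => hl x (List.take_subset M l hx)) hlen1
    have hQ : l₂.prod ∈ J :=
      ih J hJl hJr hJpow _ (fun x hx => hl x (List.drop_subset M l (hcl ▸ List.mem_cons_of_mem c hx))) hlen2
    have hc : c ∈ S := hl c (List.drop_subset M l (hcl ▸ (List.mem_cons_self : c ∈ c :: l₂)))
    have hsplit : l.prod = (l.take M).prod * (c * l₂.prod) := by
      conv_lhs => rw [← List.take_append_drop M l]
      rw [hcl, List.prod_append, List.prod_cons]
    rw [hsplit]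
    exact hkey _ hP c hc _ hQ

theorem foldl_mul_eq {M : Type*} [Monoid M] : ∀ (l : List M) (x : M),
    l.foldl (· * ·) x = x * l.prod := by
  intro l
  induction l with
  | nil => intro x; simp
  | cons b t ih => intro x; rw [List.foldl_cons, ih, List.prod_cons, mul_assoc]

theorem nprod_append_singleton {R : Type*} [Mul R] (a : R) (l : List R) (r : R) :
    nprod a (l ++ [r]) = nprod a l * r := by
  simp [nprod, List.foldl_append]

theorem inr_nprod {F : Type*} [Field F]
    {R : Type*} [NonUnitalRing R] [Module F R] [SMulCommClass F R R] [IsScalarTower F R R]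
    (a : R) (l : List R) :
    (Unitization.inr (nprod a l) : Unitization F R)
      = ((Unitization.inr a : Unitization F R) :: (l.map (Unitization.inr))).prod := by
  rw [List.prod_cons, ← foldl_mul_eq]
  induction l using List.reverseRecOn with
  | nil => simp [nprod]
  | append_singleton t r ih =>
    rw [nprod_append_singleton, Unitization.inr_mul, ih, List.map_append,
      List.foldl_append]
    simp

theorem inr_pow {F : Type*} [Field F]
    {R : Type*} [NonUnitalRing R] [Module F R] [SMulCommClass F R R] [IsScalarTower F R R]
    (r : R) (k : ℕ) :
    (Unitization.inr r : Unitization F R) ^ (k + 1)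
      = Unitization.inr (nprod r (List.replicate k r)) := by
  induction k with
  | zero => simp [nprod]
  | succ k ih =>
    rw [pow_succ, ih, (List.replicate_succ' : List.replicate (k + 1) r = List.replicate k r ++ [r]), nprod_append_singleton,
      Unitization.inr_mul]

/-- Nagata–Higman theorem: a (not necessarily unital) algebra over a field of characteristic
zero in which `xⁿ = 0` for every element `x` (a nil-algebra of bounded index `n`) is
nilpotent: there is `N ≥ 1` such that every product of `N` elements vanishes. -/
theorem nagata_higman
    {F : Type*} [Field F] [CharZero F]
    {R : Type*} [NonUnitalRing R] [Module F R] [SMulCommClass F R R] [IsScalarTower F R R]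
    (n : ℕ) (hn : 0 < n)
    (hnil : ∀ x : R, nprod x (List.replicate (n - 1) x) = 0) :
    ∃ N : ℕ, 0 < N ∧ ∀ (a : R) (l : List R), l.length = N - 1 → nprod a l = 0 := by
  have h2n : 2 ≤ 2 ^ n := by
    calc 2 = 2 ^ 1 := (pow_one 2).symm
    _ ≤ 2 ^ n := Nat.pow_le_pow_right (by omega) hn
  refine ⟨2 ^ n - 1, by omega, ?_⟩
  intro a l hlen
  set S : Submodule F (Unitization F R) :=
    LinearMap.ker ((Unitization.fstHom F R).toLinearMap) with hS
  have hmemS : ∀ x : Unitization F R, x ∈ S ↔ x.fst = 0 := by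
    intro x
    simp [hS, LinearMap.mem_ker]
  have hSl : ∀ (x : Unitization F R), ∀ s ∈ S, x * s ∈ S := by
    intro x s hs
    rw [hmemS] at hs ⊢
    rw [Unitization.fst_mul, hs, mul_zero]
  have hSr : ∀ (x : Unitization F R), ∀ s ∈ S, s * x ∈ S := by
    intro x s hs
    rw [hmemS] at hs ⊢
    rw [Unitization.fst_mul, hs, zero_mul]
  have hnilA : ∀ s ∈ S, s ^ n = 0 := by
    intro s hs
    rw [hmemS] at hs
    have hrepr : s = Unitization.inr s.snd := by
      ext
      · rw [hs, Unitization.fst_inr]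
      · rw [Unitization.snd_inr]
    rw [hrepr, show n = (n - 1) + 1 by omega, inr_pow, hnil, Unitization.inr_zero]
  have hind := higman_induct S hSl hSr n hn ⊥
    (by intro x s hs; rw [Submodule.mem_bot] at hs ⊢; rw [hs, mul_zero])
    (by intro x s hs; rw [Submodule.mem_bot] at hs ⊢; rw [hs, zero_mul])
    (by intro s hs; rw [Submodule.mem_bot]; exact hnilA s hs)
    ((Unitization.inr a) :: (l.map (Unitization.inr)))
    (by
      intro x hx
      rw [hmemS]
      rcases List.mem_cons.mp hx with h | h
      · rw [h, Unitization.fst_inr]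
      · obtain ⟨r, _, rfl⟩ := List.mem_map.mp h
        rw [Unitization.fst_inr])
    (by simp [hlen]; omega)
  rw [Submodule.mem_bot, ← inr_nprod] at hind
  exact Unitization.inr_injective hind
end

section
/- Let X be a complex Banach space, K ∈ B(X) a nonzero compact operator, and T ∈ B(X) such that TK = KT and for every A in the unital algebra generated by T and K the operator AK is quasinilpotent. If additionally dim X = ∞, then there exists a non-trivial closed subspace invariant under both T and K. (Special case: if AK is quasinilpotent for all A in an algebra A containing the identity and K ≠ 0 is compact with AK quasinilpotent for all A ∈ A, then A has a non-trivial invariant subspace.) -/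
open Metric Set Filter


/-- Lomonosov-type statement: if `K` is a nonzero compact operator commuting with `T`, on an
infinite-dimensional complex Banach space, and `AK` is quasinilpotent for every `A` in the
unital algebra generated by `T` and `K`, then `T` and `K` have a common non-trivial closed
invariant subspace. -/
theorem invariant_subspace_of_quasinilpotent_products
    {X : Type*} [NormedAddCommGroup X] [NormedSpace ℂ X] [CompleteSpace X]
    (hinf : ¬ FiniteDimensional ℂ X)
    (K T : X →L[ℂ] X) (hK : IsCompactOperator ⇑K) (hK0 : K ≠ 0)
    (hcomm : T * K = K * T)
    (hq : ∀ A ∈ Algebra.adjoin ℂ ({T, K} : Set (X →L[ℂ] X)), spectralRadius ℂ (A * K) = 0) :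
    ∃ M : Submodule ℂ X, IsClosed (M : Set X) ∧ M ≠ ⊥ ∧ M ≠ ⊤ ∧
      (∀ x ∈ M, T x ∈ M) ∧ (∀ x ∈ M, K x ∈ M) := by
  classical
  by_contra hcon
  set 𝒜 : Subalgebra ℂ (X →L[ℂ] X) := Algebra.adjoin ℂ ({T, K} : Set (X →L[ℂ] X)) with h𝒜
  have hT𝒜 : T ∈ 𝒜 := Algebra.subset_adjoin (by simp)
  have hK𝒜 : K ∈ 𝒜 := Algebra.subset_adjoin (by simp)
  have hKcomm : ∀ A ∈ 𝒜, K * A = A * K := by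
    intro A hA
    induction hA using Algebra.adjoin_induction with
    | mem x hx =>
        rcases hx with rfl | hx
        · exact hcomm.symm
        · simp at hx; rw [hx]
    | algebraMap r => exact (Algebra.commutes r K).symm
    | add x y hx hy ihx ihy => rw [mul_add, add_mul, ihx, ihy]
    | mul x y hx hy ihx ihy => rw [← mul_assoc, ihx, mul_assoc, ihy, mul_assoc]
  -- every nonzero vector has dense orbit
  have horb : ∀ y : X, y ≠ 0 → Dense {z : X | ∃ A ∈ 𝒜, A y = z} := by
    intro y hy
    by_contra hd
    let e : (X →L[ℂ] X) →ₗ[ℂ] X :=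
      { toFun := fun A => A y, map_add' := fun A B => rfl, map_smul' := fun c A => rfl }
    let M0 : Submodule ℂ X := Submodule.map e (Subalgebra.toSubmodule 𝒜)
    have hM0 : (M0 : Set X) = {z : X | ∃ A ∈ 𝒜, A y = z} := by
      ext z; simp [M0, e, Submodule.mem_map]
    let M := M0.topologicalClosure
    have hyM : y ∈ M := by
      refine Submodule.le_topologicalClosure _ ?_
      refine ⟨1, ?_, ?_⟩
      · exact one_mem 𝒜
      · simp [e]
    apply hcon
    refine ⟨M, Submodule.isClosed_topologicalClosure _, ?_, ?_, ?_, ?_⟩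
    · intro h; rw [h] at hyM; exact hy hyM
    · intro h
      apply hd
      have : Dense (M0 : Set X) := by
        rw [← Submodule.dense_iff_topologicalClosure_eq_top] at h
        exact h
      rwa [hM0] at this
    · intro x hx
      have hsub : T '' (M0 : Set X) ⊆ (M0 : Set X) := by
        rintro _ ⟨z, hz, rfl⟩
        rw [hM0] at hz ⊢
        obtain ⟨A, hA, rfl⟩ := hz
        exact ⟨T * A, mul_mem hT𝒜 hA, rfl⟩
      have hx' : x ∈ closure (M0 : Set X) := hx
      have : T x ∈ closure (M0 : Set X) :=
        map_mem_closure T.continuous hx' (fun z hz => hsub ⟨z, hz, rfl⟩)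
      exact this
    · intro x hx
      have hsub : ∀ z ∈ (M0 : Set X), K z ∈ (M0 : Set X) := by
        intro z hz
        rw [hM0] at hz ⊢
        obtain ⟨A, hA, rfl⟩ := hz
        exact ⟨K * A, mul_mem hK𝒜 hA, rfl⟩
      have hx' : x ∈ closure (M0 : Set X) := hx
      have : K x ∈ closure (M0 : Set X) :=
        map_mem_closure K.continuous hx' hsub
      exact this
  -- choose x0
  obtain ⟨u, hu⟩ : ∃ u, K u ≠ 0 := by
    by_contra h; push_neg at h; exact hK0 (by ext v; simpa using h v)
  have hKu : 0 < ‖K u‖ := norm_pos_iff.mpr hu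
  have hun : 0 < ‖u‖ := norm_pos_iff.mpr (fun h => hu (by simp [h]))
  have hKn : 0 < ‖K‖ := norm_pos_iff.mpr hK0
  set c0 : ℝ := 2 / ‖u‖ + 2 * ‖K‖ / ‖K u‖ with hc0
  have hc0pos : 0 < c0 := by positivity
  have hc0a : 2 / ‖u‖ ≤ c0 := le_add_of_nonneg_right (by positivity)
  have hc0b : 2 * ‖K‖ / ‖K u‖ ≤ c0 := le_add_of_nonneg_left (by positivity)
  set x0 : X := (c0 : ℂ) • u with hx0def
  have hx0n : ‖x0‖ = c0 * ‖u‖ := by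
    rw [hx0def, norm_smul, Complex.norm_real, Real.norm_of_nonneg hc0pos.le]
  have hx02 : 2 ≤ ‖x0‖ := by
    rw [hx0n]
    calc (2:ℝ) = (2/‖u‖) * ‖u‖ := by field_simp
    _ ≤ c0 * ‖u‖ := mul_le_mul_of_nonneg_right hc0a hun.le
  have hx0pos : 0 < ‖x0‖ := lt_of_lt_of_le (by norm_num) hx02
  have hKx0 : 2 * ‖K‖ ≤ ‖K x0‖ := by
    have hx : K x0 = (c0:ℂ) • K u := by rw [hx0def, map_smul]
    rw [hx, norm_smul, Complex.norm_real, Real.norm_of_nonneg hc0pos.le]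
    calc 2 * ‖K‖ = (2 * ‖K‖ / ‖K u‖) * ‖K u‖ := by field_simp
    _ ≤ c0 * ‖K u‖ := mul_le_mul_of_nonneg_right hc0b hKu.le
  have hball : ∀ y ∈ closedBall x0 1, ‖K‖ ≤ ‖K y‖ := by
    intro y hy
    have h1 : ‖K x0 - K y‖ ≤ ‖K‖ * ‖x0 - y‖ := by
      rw [← map_sub]; exact K.le_opNorm _
    have h2 : ‖x0 - y‖ ≤ 1 := by
      rw [← dist_eq_norm]; exact mem_closedBall'.mp hy
    have h3 := norm_sub_norm_le (K x0) (K y)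
    nlinarith
  set S : Set X := closure (⇑K '' closedBall x0 1) with hS
  have hScomp : IsCompact S := hK.isCompact_closure_image_of_bounded isBounded_closedBall
  have hSnorm : ∀ y ∈ S, ‖K‖ ≤ ‖y‖ := by
    intro y hy
    have hcl : S ⊆ {z : X | ‖K‖ ≤ ‖z‖} := by
      apply closure_minimal
      · rintro _ ⟨w, hw, rfl⟩; exact hball w hw
      · exact isClosed_le continuous_const continuous_norm
    exact hcl hy
  have hKx0S : K x0 ∈ S := subset_closure ⟨x0, mem_closedBall_self (by norm_num), rfl⟩
  -- cover
  let U : 𝒜 → Set X := fun A => (A : X →L[ℂ] X) ⁻¹' ball x0 1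
  have hcover : S ⊆ ⋃ A, U A := by
    intro y hy
    have hy0 : y ≠ 0 := by
      intro h
      have h2 := hSnorm y hy
      rw [h, norm_zero] at h2
      linarith
    obtain ⟨z, hz1, hz2⟩ := (horb y hy0).exists_mem_open isOpen_ball ⟨x0, mem_ball_self one_pos⟩
    obtain ⟨A, hA, rfl⟩ := hz1
    exact mem_iUnion.mpr ⟨⟨A, hA⟩, hz2⟩
  obtain ⟨t, ht⟩ := hScomp.elim_finite_subcover U
    (fun A => (A : X →L[ℂ] X).continuous.isOpen_preimage _ isOpen_ball) hcover
  obtain ⟨c, hc1, hcA⟩ : ∃ c : ℝ, 1 ≤ c ∧ ∀ A ∈ t, ‖((A : ↥𝒜) : X →L[ℂ] X)‖ ≤ c := by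
    refine ⟨1 + ∑ A ∈ t, ‖(A : X →L[ℂ] X)‖,
      le_add_of_nonneg_right (Finset.sum_nonneg fun _ _ => norm_nonneg _), ?_⟩
    intro A hA
    have := Finset.single_le_sum (f := fun A : ↥𝒜 => ‖(A : X →L[ℂ] X)‖)
      (fun _ _ => norm_nonneg _) hA
    linarith
  have hcpos : 0 < c := lt_of_lt_of_le one_pos hc1
  -- Hilden's iteration
  have key : ∀ n : ℕ, ∃ B : X →L[ℂ] X, B ∈ 𝒜 ∧ ‖B‖ ≤ c ^ n ∧ (B * K ^ (n+1)) x0 ∈ S := by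
    intro n
    induction n with
    | zero =>
      refine ⟨1, one_mem 𝒜, by
        have h : ‖(1 : X →L[ℂ] X)‖ ≤ 1 := ContinuousLinearMap.norm_id_le
        simpa using h, ?_⟩
      simpa using hKx0S
    | succ n ih =>
      obtain ⟨B, hB𝒜, hBn, hBS⟩ := ih
      obtain ⟨A, hAt, hAy⟩ : ∃ A ∈ t, ((A : X →L[ℂ] X) ((B * K ^ (n+1)) x0)) ∈ ball x0 1 := by
        have h := ht hBS
        simp only [mem_iUnion] at h
        obtain ⟨A, hA1, hA2⟩ := h
        exact ⟨A, hA1, hA2⟩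
      refine ⟨(A : X →L[ℂ] X) * B, mul_mem A.2 hB𝒜, ?_, ?_⟩
      · calc ‖(A : X →L[ℂ] X) * B‖ ≤ ‖(A : X →L[ℂ] X)‖ * ‖B‖ := norm_mul_le _ _
        _ ≤ c * c ^ n := mul_le_mul (hcA A hAt) hBn (norm_nonneg _) hcpos.le
        _ = c ^ (n+1) := (pow_succ' c n).symm
      · have heq : (((A : X →L[ℂ] X) * B) * K ^ (n+1+1)) x0
            = K ((A : X →L[ℂ] X) ((B * K ^ (n+1)) x0)) := by
          have h1 : ((A : X →L[ℂ] X) * B) * K ^ (n+1+1)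
              = K * (((A : X →L[ℂ] X) * B) * K ^ (n+1)) := by
            rw [pow_succ' K (n+1), ← mul_assoc, ← hKcomm _ (mul_mem A.2 hB𝒜), mul_assoc]
          rw [h1]
          simp [ContinuousLinearMap.mul_apply, mul_assoc]
        rw [heq]
        exact subset_closure ⟨_, ball_subset_closedBall hAy, rfl⟩
  -- Gelfand's formula contradiction
  have hr0 : spectralRadius ℂ K = 0 := by
    have h := hq 1 (one_mem 𝒜)
    rwa [one_mul] at h
  have hg := spectrum.pow_norm_pow_one_div_tendsto_nhds_spectralRadius K
  rw [hr0] at hg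
  obtain ⟨ε, hεpos, hεc', hεx⟩ :
      ∃ ε : ℝ, 0 < ε ∧ ε ≤ 1/(2*c) ∧ ε ≤ ‖K‖/(2*‖x0‖) :=
    ⟨min (1/(2*c)) (‖K‖/(2*‖x0‖)), lt_min (by positivity) (by positivity),
      min_le_left _ _, min_le_right _ _⟩
  have hev1 : ∀ᶠ n : ℕ in atTop, ENNReal.ofReal (‖K ^ n‖ ^ (1/(n:ℝ))) < ENNReal.ofReal ε := by
    refine hg.eventually_lt_const ?_
    simpa using ENNReal.ofReal_pos.mpr hεpos
  obtain ⟨n, hn1, hn2⟩ := (hev1.and (eventually_ge_atTop 1)).exists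
  obtain ⟨m, rfl⟩ : ∃ m, n = m + 1 := ⟨n - 1, (Nat.succ_pred_eq_of_pos hn2).symm⟩
  have hlt : ‖K ^ (m+1)‖ ^ (1/((m+1:ℕ):ℝ)) < ε :=
    (ENNReal.ofReal_lt_ofReal_iff hεpos).mp hn1
  have hKm : ‖K ^ (m+1)‖ < ε ^ (m+1) := by
    have hnn : (0:ℝ) ≤ ‖K ^ (m+1)‖ ^ (1/((m+1:ℕ):ℝ)) := Real.rpow_nonneg (norm_nonneg _) _
    have hid : (‖K ^ (m+1)‖ ^ (1/((m+1:ℕ):ℝ))) ^ (m+1) = ‖K ^ (m+1)‖ := by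
      rw [one_div, Real.rpow_inv_natCast_pow (norm_nonneg _) (Nat.succ_ne_zero m)]
    calc ‖K ^ (m+1)‖ = (‖K ^ (m+1)‖ ^ (1/((m+1:ℕ):ℝ))) ^ (m+1) := hid.symm
    _ < ε ^ (m+1) := by
        apply pow_lt_pow_left₀ hlt hnn
        exact Nat.succ_ne_zero m
  obtain ⟨B, hB𝒜, hBn, hBS⟩ := key m
  have h1 : ‖K‖ ≤ ‖(B * K ^ (m+1)) x0‖ := hSnorm _ hBS
  have h2 : ‖(B * K ^ (m+1)) x0‖ ≤ ‖B‖ * ‖K ^ (m+1)‖ * ‖x0‖ := by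
    calc ‖(B * K ^ (m+1)) x0‖ ≤ ‖B * K ^ (m+1)‖ * ‖x0‖ := (B * K ^ (m+1)).le_opNorm x0
    _ ≤ ‖B‖ * ‖K ^ (m+1)‖ * ‖x0‖ :=
        mul_le_mul_of_nonneg_right (norm_mul_le _ _) (norm_nonneg _)
  have h3 : ‖B‖ * ‖K ^ (m+1)‖ * ‖x0‖ < c ^ m * ε ^ (m+1) * ‖x0‖ := by
    have h3a : ‖B‖ * ‖K ^ (m+1)‖ ≤ c ^ m * ‖K ^ (m+1)‖ :=
      mul_le_mul_of_nonneg_right hBn (norm_nonneg _)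
    have h3b : c ^ m * ‖K ^ (m+1)‖ < c ^ m * ε ^ (m+1) :=
      mul_lt_mul_of_pos_left hKm (pow_pos hcpos m)
    have := lt_of_le_of_lt h3a h3b
    exact mul_lt_mul_of_pos_right this hx0pos
  have hεc : ε * c ≤ 1/2 := by
    calc ε * c ≤ (1/(2*c)) * c := mul_le_mul_of_nonneg_right hεc' hcpos.le
    _ = 1/2 := by field_simp
  have h4 : c ^ m * ε ^ (m+1) * ‖x0‖ ≤ ‖K‖/2 := by
    have h6 : (ε*c) ^ m ≤ 1 := pow_le_one₀ (mul_nonneg hεpos.le hcpos.le) (by linarith)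
    calc c ^ m * ε ^ (m+1) * ‖x0‖ = (ε*c) ^ m * ε * ‖x0‖ := by ring
    _ ≤ 1 * ε * ‖x0‖ :=
        mul_le_mul_of_nonneg_right (mul_le_mul_of_nonneg_right h6 hεpos.le) (norm_nonneg _)
    _ = ε * ‖x0‖ := by ring
    _ ≤ (‖K‖/(2*‖x0‖)) * ‖x0‖ := mul_le_mul_of_nonneg_right hεx (norm_nonneg _)
    _ = ‖K‖/2 := by field_simp
  linarith
end
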